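/- Let g ≥ 3 be odd and α > √2 a real root of X^{2g+2} - 2X^{2g} - 4X^{g+2} + 4X^g + 2X^2 - 1. Then 0 < α - √2 < 4/(√2)^g. -/

import Mathlib

theorem stmt_12 (g : ℕ) (hg : 3 ≤ g) (hgo : Odd g) (α : ℝ) (hα : Real.sqrt 2 < α)
    (hroot : α ^ (2 * g + 2) - 2 * α ^ (2 * g) - 4 * α ^ (g + 2) + 4 * α ^ g
      + 2 * α ^ 2 - 1 = 0) :
    0 < α - Real.sqrt 2 ∧ α - Real.sqrt 2 < 4 / (Real.sqrt 2) ^ g := by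
  have hss : Real.sqrt 2 ^ 2 = 2 := Real.sq_sqrt (by norm_num)
  have hsnn : (0:ℝ) ≤ Real.sqrt 2 := Real.sqrt_nonneg 2
  have hs1 : 1 < Real.sqrt 2 := by nlinarith
  have hα1 : 1 < α := lt_trans hs1 hα
  have hαpos : 0 < α := by linarith
  have hα2 : 2 < α ^ 2 := by nlinarith
  have hApos : 0 < α ^ g := pow_pos hαpos g
  have e1 : α ^ (2*g+2) = α^g * α^g * α^2 := by
    rw [show 2*g+2 = g + (g+2) by ring, pow_add, pow_add]; ring
  have e2 : α ^ (2*g) = α^g * α^g := by rw [two_mul, pow_add]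
  have e3 : α ^ (g+2) = α^g * α^2 := pow_add α g 2
  rw [e1, e2, e3] at hroot
  have hkey : α^g * α^g * (α^2 - 2) = 4 * (α^g * (α^2 - 1)) - (2*α^2 - 1) := by
    linear_combination hroot
  have h2α : (0:ℝ) < 2*α^2 - 1 := by nlinarith
  have h1 : α^g * (α^2 - 2) < 4 * (α^2 - 1) := by
    nlinarith [mul_pos hApos hApos]
  have hA3 : α^3 ≤ α^g := pow_le_pow_right₀ (le_of_lt hα1) hg
  have h3 : α^3 * (α^2-2) ≤ α^g * (α^2-2) :=
    mul_le_mul_of_nonneg_right hA3 (by nlinarith)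
  have h4 : α^3 * (α^2-2) < 4 * (α^2 - 1) := lt_of_le_of_lt h3 h1
  have hαlt2 : α < 2 := by nlinarith [sq_nonneg (α-2), sq_nonneg (α^2-2), sq_nonneg α, mul_pos hαpos hαpos]
  have hsg : Real.sqrt 2 ^ g < α ^ g :=
    pow_lt_pow_left₀ hα hsnn (by omega)
  have hsgpos : 0 < Real.sqrt 2 ^ g := pow_pos (by linarith) g
  constructor
  · linarith
  · rw [lt_div_iff₀ hsgpos]
    have hstep1 : (α - Real.sqrt 2) * Real.sqrt 2 ^ g < (α - Real.sqrt 2) * α ^ g :=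
      mul_lt_mul_of_pos_left hsg (by linarith)
    have hsum : 0 < α + Real.sqrt 2 := by linarith
    have hstep2 : (α - Real.sqrt 2) * α ^ g < 4 := by
      rw [← mul_lt_mul_iff_left₀ hsum]
      have hid : (α - Real.sqrt 2) * α ^ g * (α + Real.sqrt 2) = α^g * (α^2 - 2) := by
        linear_combination (-(α ^ g)) * hss
      rw [hid]
      have : α^2 - 1 < α + Real.sqrt 2 := by nlinarith
      linarith
    linarith
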